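/- For non-ideal storage, let $g(u^+, u^-) = p(\tfrac{u^+}{\eta^+} - \eta^- u^-) + D(u^+) + D(-u^-) + C(\tfrac{u^+}{\eta^+} - \eta^- u^- - c) + \tfrac{(s - \beta)(u^+ - u^-)}{V}$ on $[0, u_{\max}]^2$, where $D, C$ are differentiable convex with $D' \leq D'_{\max}$, $C' \leq C'_{\max}$, $p \leq p_{\max}$, $\eta^+ \in (0,1]$, $V > 0$. If $s < \beta - V\big(\tfrac{p_{\max}}{\eta^+} + D'_{\max} + \tfrac{1}{\eta^+} C'_{\max}\big)$, then any minimizer of $g$ has $u^+ = u_{\max}$. -/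

import Mathlib

theorem stmt_11 (p pmax s β V c umax ηp ηm D'max C'max : ℝ) (D C : ℝ → ℝ)
    (hD : Differentiable ℝ D) (hC : Differentiable ℝ C)
    (hDconv : ConvexOn ℝ Set.univ D) (hCconv : ConvexOn ℝ Set.univ C)
    (hD' : ∀ x, deriv D x ≤ D'max) (hC' : ∀ x, deriv C x ≤ C'max)
    (hp : p ≤ pmax) (hηp : ηp ∈ Set.Ioc 0 1) (hηm : ηm ∈ Set.Ioc 0 1)
    (hV : 0 < V) (humax : 0 < umax)
    (hs : s < β - V * (pmax / ηp + D'max + (1 / ηp) * C'max)) :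
    let g : ℝ → ℝ → ℝ := fun up um =>
      p * (up / ηp - ηm * um) + D up + D (-um) +
        C (up / ηp - ηm * um - c) + (s - β) * (up - um) / V
    ∀ up ∈ Set.Icc 0 umax, ∀ um ∈ Set.Icc 0 umax,
      (∀ vp ∈ Set.Icc 0 umax, ∀ vm ∈ Set.Icc 0 umax, g up um ≤ g vp vm) →
      up = umax := by
  intro g up hup um hum hmin
  obtain ⟨hηp0, hηp1⟩ := hηp
  by_contra hne
  have hlt : up < umax := lt_of_le_of_ne hup.2 hne
  set h : ℝ → ℝ := fun x => g x um with hh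
  have hderiv : ∀ x : ℝ, HasDerivAt h
      (p * (1 / ηp) + deriv D x + deriv C (x / ηp - ηm * um - c) * (1 / ηp)
        + (s - β) * 1 / V) x := by
    intro x
    have h1 : HasDerivAt (fun x : ℝ => p * (x / ηp - ηm * um)) (p * (1 / ηp)) x := by
      have : HasDerivAt (fun x : ℝ => x / ηp - ηm * um) (1 / ηp) x := by
        simpa using ((hasDerivAt_id x).div_const ηp).sub_const (ηm * um)
      exact this.const_mul p
    have h2 : HasDerivAt D (deriv D x) x := (hD x).hasDerivAt
    have hinner : HasDerivAt (fun x : ℝ => x / ηp - ηm * um - c) (1 / ηp) x := by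
      simpa using (((hasDerivAt_id x).div_const ηp).sub_const (ηm * um)).sub_const c
    have h3 : HasDerivAt (fun x : ℝ => C (x / ηp - ηm * um - c))
        (deriv C (x / ηp - ηm * um - c) * (1 / ηp)) x :=
      (hC _).hasDerivAt.comp x hinner
    have h4 : HasDerivAt (fun x : ℝ => (s - β) * (x - um) / V) ((s - β) * 1 / V) x := by
      exact ((((hasDerivAt_id x).sub_const um).const_mul (s - β)).div_const V)
    exact ((((h1.add h2).add_const (D (-um))).add h3).add h4).congr_deriv (by ring)
  have hneg : ∀ x : ℝ, p * (1 / ηp) + deriv D x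
      + deriv C (x / ηp - ηm * um - c) * (1 / ηp) + (s - β) * 1 / V < 0 := by
    intro x
    have hpb : p * (1 / ηp) ≤ pmax * (1 / ηp) := by
      have : (0:ℝ) < 1 / ηp := by positivity
      nlinarith
    have hCb : deriv C (x / ηp - ηm * um - c) * (1 / ηp) ≤ C'max * (1 / ηp) := by
      have : (0:ℝ) ≤ 1 / ηp := by positivity
      nlinarith [hC' (x / ηp - ηm * um - c)]
    have hDb := hD' x
    have hsb : (s - β) * 1 / V < -(pmax / ηp + D'max + (1 / ηp) * C'max) := by
      rw [div_lt_iff₀ hV]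
      nlinarith
    have hpm : pmax * (1 / ηp) = pmax / ηp := by ring
    have hcm : C'max * (1 / ηp) = (1 / ηp) * C'max := by ring
    linarith [hpb, hCb, hDb, hsb]
  have hanti : StrictAnti h :=
    strictAnti_of_deriv_neg fun x => by rw [(hderiv x).deriv]; exact hneg x
  have h1 : h umax < h up := hanti hlt
  have h2 : h up ≤ h umax := hmin umax ⟨le_of_lt humax, le_refl umax⟩ um hum
  linarith
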